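/- arXiv:0710.5457 — 10 statements merged into one kernel-verified Lean document; each statement's English description precedes it below -/
import Mathlib

section
/- Let X⁻ be a nonempty proper ideal of ℤ^r and define the Cubist subset X = X⁻ \ X⁻[-1], where X⁻[-1] = {x - (1,1,...,1) : x ∈ X⁻}. Then for each i ∈ ℤ, the set X_i = {x ∈ ℤ^(r-1) : (x,i) ∈ X and (x,i-1) ∈ X} is either empty or a Cubist subset of ℤ^(r-1), i.e. of the form Y⁻ \ Y⁻[-1] for some nonempty proper ideal Y⁻ of ℤ^(r-1). -/
/-- The translate `S[ζ] = {x + ζ(1,...,1) : x ∈ S}`. -/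
def trSet {r : ℕ} (S : Set (Fin r → ℤ)) (ζ : ℤ) : Set (Fin r → ℤ) :=
  (fun x => x + fun _ => ζ) '' S

/-- A Cubist subset of `ℤ^r`: `X = X⁻ \ X⁻[-1]` for a nonempty proper ideal `X⁻`. -/
def IsCubist {r : ℕ} (X : Set (Fin r → ℤ)) : Prop :=
  ∃ I : Set (Fin r → ℤ), I.Nonempty ∧ I ≠ Set.univ ∧ IsLowerSet I ∧ X = I \ trSet I (-1)

lemma mem_trSet_neg_one {r : ℕ} {S : Set (Fin r → ℤ)} {y : Fin r → ℤ} :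
    y ∈ trSet S (-1) ↔ (y + fun _ => (1 : ℤ)) ∈ S := by
  constructor
  · rintro ⟨z, hz, rfl⟩
    have : (z + (fun _ => (-1 : ℤ))) + (fun _ => (1 : ℤ)) = z := by
      funext j; simp
    rwa [this]
  · intro h
    exact ⟨y + fun _ => (1 : ℤ), h, by funext j; simp⟩

lemma snoc_add_one {r : ℕ} (x : Fin r → ℤ) (a : ℤ) :
    (Fin.snoc x a + fun _ => (1 : ℤ)) = Fin.snoc (x + fun _ => (1 : ℤ)) (a + 1) := by
  funext j
  refine Fin.lastCases ?_ ?_ j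
  · simp
  · intro k; simp

lemma snoc_le_snoc {r : ℕ} {x y : Fin r → ℤ} {a b : ℤ} (h : x ≤ y) (hab : a ≤ b) :
    (Fin.snoc x a : Fin (r+1) → ℤ) ≤ Fin.snoc y b := by
  intro j
  refine Fin.lastCases ?_ ?_ j
  · simpa using hab
  · intro k; simpa using h k

/-- slices `X_i = {x | (x,i) ∈ X and (x,i-1) ∈ X}` of a Cubist subset
are empty or Cubist. -/
theorem cubist_slice (r : ℕ) (X : Set (Fin (r + 1) → ℤ)) (hX : IsCubist X) (i : ℤ) :
    {x : Fin r → ℤ | Fin.snoc x i ∈ X ∧ Fin.snoc x (i - 1) ∈ X} = ∅ ∨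
      IsCubist {x : Fin r → ℤ | Fin.snoc x i ∈ X ∧ Fin.snoc x (i - 1) ∈ X} := by
  obtain ⟨I, hne, hproper, hlow, rfl⟩ := hX
  set J : Set (Fin r → ℤ) := {x | Fin.snoc x i ∈ I} with hJdef
  have key : {x : Fin r → ℤ | Fin.snoc x i ∈ I \ trSet I (-1) ∧
      Fin.snoc x (i - 1) ∈ I \ trSet I (-1)} = J \ trSet J (-1) := by
    ext x
    simp only [Set.mem_setOf_eq, Set.mem_diff, hJdef]
    have hJt : x ∈ trSet J (-1) ↔ Fin.snoc (x + fun _ => (1 : ℤ)) i ∈ I := by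
      rw [mem_trSet_neg_one]; exact Iff.rfl
    have h1t : Fin.snoc x (i - 1) ∈ trSet I (-1) ↔
        Fin.snoc (x + fun _ => (1 : ℤ)) i ∈ I := by
      rw [mem_trSet_neg_one, snoc_add_one, sub_add_cancel]
    constructor
    · rintro ⟨⟨h1, -⟩, -, h4⟩
      exact ⟨h1, fun hm => h4 (h1t.mpr (hJt.mp hm))⟩
    · rintro ⟨h1, h2⟩
      have hnot : Fin.snoc (x + fun _ => (1 : ℤ)) i ∉ I := fun h => h2 (hJt.mpr h)
      refine ⟨⟨h1, ?_⟩, ?_, fun hm => hnot (h1t.mp hm)⟩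
      · intro hm
        rw [mem_trSet_neg_one, snoc_add_one] at hm
        exact hnot (hlow (snoc_le_snoc le_rfl (by omega)) hm)
      · exact hlow (snoc_le_snoc le_rfl (by omega)) h1
  rw [key]
  rcases Set.eq_empty_or_nonempty J with hJe | hJne
  · left; rw [hJe]; simp
  rcases eq_or_ne J Set.univ with hJu | hJp
  · left
    rw [hJu]
    have : trSet (Set.univ : Set (Fin r → ℤ)) (-1) = Set.univ := by
      ext y; simp [mem_trSet_neg_one]
    rw [this]; simp
  · right
    refine ⟨J, hJne, hJp, ?_, rfl⟩
    intro a b hab ha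
    exact hlow (snoc_le_snoc hab le_rfl) ha
end

section
/- A subset X of ℤ^r is Cubist (i.e. X = X⁻ \ X⁻[-1] for some nonempty proper ideal X⁻) if and only if X = X⁺ \ X⁺[1], where X⁺ is a nonempty proper coideal (upward closed set) of ℤ^r. -/
lemma mem_trSet {r : ℕ} {S : Set (Fin r → ℤ)} {ζ : ℤ} {y : Fin r → ℤ} :
    y ∈ trSet S ζ ↔ (y - fun _ => ζ) ∈ S := by
  constructor
  · rintro ⟨x, hx, rfl⟩; simpa
  · intro h; exact ⟨_, h, by simp⟩

lemma lower_trSet {r : ℕ} {S : Set (Fin r → ℤ)} {ζ : ℤ} (h : IsLowerSet S) :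
    IsLowerSet (trSet S ζ) := by
  intro a b hba ha
  rw [mem_trSet] at *
  exact h (sub_le_sub_right hba _) ha

lemma upper_trSet {r : ℕ} {S : Set (Fin r → ℤ)} {ζ : ℤ} (h : IsUpperSet S) :
    IsUpperSet (trSet S ζ) := by
  intro a b hba ha
  rw [mem_trSet] at *
  exact h (sub_le_sub_right hba _) ha

/-- `X` is Cubist iff `X = X⁺ \ X⁺[1]` for a nonempty proper coideal `X⁺`. -/
theorem cubist_iff_coideal (r : ℕ) (X : Set (Fin r → ℤ)) :
    IsCubist X ↔
      ∃ C : Set (Fin r → ℤ), C.Nonempty ∧ C ≠ Set.univ ∧ IsUpperSet C ∧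
        X = C \ trSet C 1 := by
  constructor
  · rintro ⟨I, ⟨b, hb⟩, hne, hlow, rfl⟩
    refine ⟨(trSet I (-1))ᶜ, ?_, ?_, (lower_trSet hlow).compl, ?_⟩
    · obtain ⟨a, ha⟩ : ∃ a, a ∉ I := by
        by_contra h; push_neg at h; exact hne (Set.eq_univ_of_forall h)
      refine ⟨a + fun _ => (-1:ℤ), fun hmem => ha ?_⟩
      rw [mem_trSet] at hmem; simpa using hmem
    · intro h
      have : (b + fun _ => (-1:ℤ)) ∈ (trSet I (-1))ᶜ := h ▸ Set.mem_univ _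
      exact this (mem_trSet.mpr (by simpa using hb))
    · ext y
      simp only [Set.mem_diff, Set.mem_compl_iff, mem_trSet]
      constructor
      · rintro ⟨hy, hy'⟩
        refine ⟨hy', fun h => h ?_⟩
        convert hy using 2
        funext i; simp
      · rintro ⟨hy, hy'⟩
        refine ⟨?_, hy⟩
        by_contra h
        apply hy'
        intro h2
        apply h
        convert h2 using 2
        funext i; simp
  · rintro ⟨C, ⟨b, hb⟩, hne, hup, rfl⟩
    refine ⟨(trSet C 1)ᶜ, ?_, ?_, (upper_trSet hup).compl, ?_⟩
    · obtain ⟨a, ha⟩ : ∃ a, a ∉ C := by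
        by_contra h; push_neg at h; exact hne (Set.eq_univ_of_forall h)
      refine ⟨a + fun _ => (1:ℤ), fun hmem => ha ?_⟩
      rw [mem_trSet] at hmem; simpa using hmem
    · intro h
      have : (b + fun _ => (1:ℤ)) ∈ (trSet C 1)ᶜ := h ▸ Set.mem_univ _
      exact this (mem_trSet.mpr (by simpa using hb))
    · ext y
      simp only [Set.mem_diff, Set.mem_compl_iff, mem_trSet]
      constructor
      · rintro ⟨hy, hy'⟩
        refine ⟨hy', fun h => h ?_⟩
        convert hy using 2
        funext i; simp
      · rintro ⟨hy, hy'⟩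
        refine ⟨?_, hy⟩
        by_contra h
        apply hy'
        intro h2
        apply h
        convert h2 using 2
        funext i; simp
end

section
/- Let X be a Cubist subset of ℤ^r. Then ℤ^r is the disjoint union of the translates X[m] = {x + m(1,...,1) : x ∈ X} over all m ∈ ℤ. -/
/-- `ℤ^r` is the disjoint union of the translates `X[m]`, `m ∈ ℤ`:
every point lies in exactly one translate. -/
theorem cubist_partition (r : ℕ) (X : Set (Fin r → ℤ)) (hX : IsCubist X)
    (y : Fin r → ℤ) : ∃! m : ℤ, y ∈ trSet X m := by
  classical
  obtain ⟨I, ⟨a, ha⟩, hI, hlow, rfl⟩ := hX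
  obtain ⟨b, hb⟩ : ∃ b, b ∉ I := by
    by_contra h; push_neg at h; exact hI (Set.eq_univ_of_forall h)
  set S : ℤ → Prop := fun m => (y - fun _ => m) ∈ I with hSdef
  have hup : ∀ {m m' : ℤ}, m ≤ m' → S m → S m' := by
    intro m m' h hm
    exact hlow (fun i => by simp only [Pi.sub_apply]; omega) hm
  -- S is nonempty
  obtain ⟨M, hM⟩ := Finite.exists_le (fun i => y i - a i)
  have hSM : S M := hlow (fun i => by have := hM i; simp only [Pi.sub_apply]; omega) ha
  -- S is bounded below
  obtain ⟨N, hN⟩ := Finite.exists_le (fun i => b i - y i)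
  have hnotS : ¬ S (-N) := by
    intro h
    exact hb (hlow (fun i => by have := hN i; simp only [Pi.sub_apply]; omega) h)
  have hbdd : ∀ z : ℤ, S z → (-N) + 1 ≤ z := by
    intro z hz
    by_contra h
    exact hnotS (hup (by omega) hz)
  obtain ⟨m₀, hm₀, hleast⟩ := Int.exists_least_of_bdd (P := S) ⟨-N + 1, hbdd⟩ ⟨M, hSM⟩
  have key : ∀ m : ℤ, y ∈ trSet (I \ trSet I (-1)) m ↔ (S m ∧ ¬ S (m - 1)) := by
    intro m
    rw [mem_trSet, Set.mem_diff, mem_trSet]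
    have : ((y - fun _ => m) - fun _ => (-1 : ℤ)) = (y - fun _ => m - 1) := by
      funext i; simp only [Pi.sub_apply]; ring
    rw [this]
  refine ⟨m₀, ?_, ?_⟩
  · exact (key m₀).mpr ⟨hm₀, fun h => by have := hleast _ h; omega⟩
  · intro m hm
    rw [key] at hm
    obtain ⟨h1, h2⟩ := hm
    have h3 := hleast _ h1
    by_contra hne
    exact h2 (hup (by omega) hm₀)
end

section
/- Let X be a Cubist subset of ℤ^r and x ∈ X. Then there is a unique index i ∈ {1,...,r} such that x + F_i ⊆ X, where F_i = {Σ_{j<i} a_j ε_j − Σ_{j>i} a_j ε_j : a_j ∈ {0,1}}. Moreover i = max{ j : x + ε_1 + ... + ε_{j−1} ∈ X }. -/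
/-- The model facet `F_i = {∑_{j<i} a_j ε_j - ∑_{j>i} a_j ε_j : a_j ∈ {0,1}}`
(indices `0`-based). -/
def FacetAt {r : ℕ} (i : Fin r) : Set (Fin r → ℤ) :=
  {z | z i = 0 ∧ ∀ j : Fin r, (j < i → (z j = 0 ∨ z j = 1)) ∧ (i < j → (z j = 0 ∨ z j = -1))}

/-- The model cone `C_i = ℤ_{≤0}^{i-1} × ℤ × ℤ_{≥0}^{r-i}` (indices `0`-based). -/
def ConeAt {r : ℕ} (i : Fin r) : Set (Fin r → ℤ) :=
  {z | (∀ j : Fin r, j < i → z j ≤ 0) ∧ (∀ j : Fin r, i < j → 0 ≤ z j)}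

/-- The point `x + ε_1 + ... + ε_{i}` (0-based: sum of the first `i` basis vectors). -/
def prefixPt {r : ℕ} (x : Fin r → ℤ) (i : Fin r) : Fin r → ℤ :=
  fun j => x j + if j < i then 1 else 0

/-- `i` is the largest index such that `x + ε_1 + ... + ε_{i-1} ∈ X`. -/
def IsMaxIdx {r : ℕ} (X : Set (Fin r → ℤ)) (x : Fin r → ℤ) (i : Fin r) : Prop :=
  prefixPt x i ∈ X ∧ ∀ j : Fin r, prefixPt x j ∈ X → j ≤ i

/-- for `x` in a Cubist subset `X` there is a unique `i` with
`x + F_i ⊆ X`, namely `i = max{j : x + ε_1 + ... + ε_{j-1} ∈ X}`. -/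
theorem vertex_facet_unique (r : ℕ) (X : Set (Fin r → ℤ)) (hX : IsCubist X)
    (x : Fin r → ℤ) (hx : x ∈ X) :
    ∃ i : Fin r,
      ({z : Fin r → ℤ | z - x ∈ FacetAt i} ⊆ X ∧
        ∀ i' : Fin r, {z : Fin r → ℤ | z - x ∈ FacetAt i'} ⊆ X → i' = i) ∧
      IsMaxIdx X x i := by
  classical
  obtain ⟨I, hne, hproper, hlow, hXeq⟩ := hX
  have htr : ∀ z : Fin r → ℤ, z ∈ trSet I (-1) ↔ (z + fun _ => (1:ℤ)) ∈ I := by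
    intro z
    constructor
    · rintro ⟨y, hy, rfl⟩
      have h : (y + fun _ => (-1:ℤ)) + (fun _ => (1:ℤ)) = y := by
        funext j; simp
      rwa [h]
    · intro h
      exact ⟨z + fun _ => (1:ℤ), h, by funext j; simp⟩
  have hmem : ∀ z, z ∈ X ↔ z ∈ I ∧ (z + fun _ => (1:ℤ)) ∉ I := by
    intro z; rw [hXeq]; simp [Set.mem_diff, htr]
  obtain ⟨hxI, hx1⟩ := (hmem x).1 hx
  have hr : 0 < r := by
    by_contra h
    push_neg at h
    obtain ⟨y, hy⟩ := (Set.ne_univ_iff_exists_notMem I).1 hproper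
    apply hy
    have hxy : y = x := by funext j; exact absurd j.isLt (by omega)
    rwa [hxy]
  -- L1 : translates of prefix points by (1,...,1) are never in I
  have L1 : ∀ j : Fin r, (prefixPt x j + fun _ => (1:ℤ)) ∉ I := by
    intro j hj
    apply hx1
    refine hlow (fun k => ?_) hj
    simp only [prefixPt, Pi.add_apply]
    split <;> omega
  set T : Finset (Fin r) := Finset.univ.filter (fun j => prefixPt x j ∈ I) with hT
  have hT0 : (⟨0, hr⟩ : Fin r) ∈ T := by
    simp only [hT, Finset.mem_filter, Finset.mem_univ, true_and]
    have h : prefixPt x ⟨0, hr⟩ = x := by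
      funext j
      simp only [prefixPt]
      have : ¬ (j < (⟨0, hr⟩ : Fin r)) := by
        simp [Fin.lt_def]
      simp [this]
    rwa [h]
  have hTne : T.Nonempty := ⟨_, hT0⟩
  set i : Fin r := T.max' hTne with hi
  have hiT : i ∈ T := T.max'_mem hTne
  have hiI : prefixPt x i ∈ I := by
    simpa only [hT, Finset.mem_filter, Finset.mem_univ, true_and] using hiT
  have hmemT : ∀ j : Fin r, prefixPt x j ∈ I → j ≤ i := by
    intro j hj
    exact Finset.le_max' T j (by simp [hT, hj])
  -- the point q = x + ε_1 + ... + ε_{i+1} is not in I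
  have hq : (fun j => x j + if j ≤ i then 1 else 0 : Fin r → ℤ) ∉ I := by
    by_cases hcase : i.val + 1 < r
    · set i₁ : Fin r := ⟨i.val + 1, hcase⟩ with hi₁
      have heq : (fun j => x j + if j ≤ i then 1 else 0 : Fin r → ℤ) = prefixPt x i₁ := by
        funext j
        simp only [prefixPt]
        have h2 : j ≤ i ↔ j < i₁ := by
          simp only [Fin.le_def, Fin.lt_def, hi₁]; omega
        by_cases h : j ≤ i
        · simp [h, h2.1 h]
        · simp [h, mt h2.2 h]
      rw [heq]
      intro hI
      have : i₁ ≤ i := hmemT i₁ hI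
      simp only [Fin.le_def, hi₁] at this
      omega
    · have heq : (fun j => x j + if j ≤ i then 1 else 0 : Fin r → ℤ)
          = x + fun _ => (1:ℤ) := by
        funext j
        have : j ≤ i := by
          simp only [Fin.le_def]; omega
        simp [this]
      rw [heq]; exact hx1
  refine ⟨i, ⟨?_, ?_⟩, ?_, ?_⟩
  · -- x + F_i ⊆ X
    intro z hz
    obtain ⟨hzi, hzj⟩ := hz
    simp only [Pi.sub_apply] at hzi hzj
    rw [hmem]
    constructor
    · refine hlow (fun j => ?_) hiI
      simp only [prefixPt]
      rcases lt_trichotomy j i with h | h | h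
      · rcases (hzj j).1 h with h1 | h1 <;> simp [h] <;> omega
      · subst h; simp; omega
      · have : ¬ j < i := not_lt_of_gt h
        rcases (hzj j).2 h with h1 | h1 <;> simp [this] <;> omega
    · intro hzI
      apply hq
      refine hlow (fun j => ?_) hzI
      simp only [Pi.add_apply]
      rcases lt_trichotomy j i with h | h | h
      · have hzj1 := (hzj j).1 h
        have : j ≤ i := le_of_lt h
        simp only [this, if_true]; omega
      · subst h; simp; omega
      · have : ¬ j ≤ i := not_le_of_gt h
        have hzj1 := (hzj j).2 h
        simp only [this, if_false]; omega
  · -- uniqueness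
    intro i' hsub
    have hi'le : i' ≤ i := by
      have hp : prefixPt x i' ∈ X := by
        apply hsub
        simp only [Set.mem_setOf_eq, FacetAt, prefixPt, Pi.sub_apply]
        constructor
        · simp
        · intro j
          constructor
          · intro h; simp [h]
          · intro h
            have : ¬ j < i' := not_lt_of_gt h
            simp [this]
      exact hmemT i' ((hmem _).1 hp).1
    by_contra hne'
    have hlt : i' < i := lt_of_le_of_ne hi'le hne'
    set w : Fin r → ℤ := fun j => x j + if i' < j then -1 else 0 with hw
    have hwX : w ∈ X := by
      apply hsub
      simp only [Set.mem_setOf_eq, FacetAt, Pi.sub_apply, hw]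
      constructor
      · simp
      · intro j
        constructor
        · intro h
          have : ¬ i' < j := not_lt_of_gt h
          simp [this]
        · intro h; simp [h]
    have hi₁lt : i'.val + 1 < r := by
      have := hlt
      simp only [Fin.lt_def] at this
      omega
    set i₁ : Fin r := ⟨i'.val + 1, hi₁lt⟩ with hi₁
    have hw1 : w + (fun _ => (1:ℤ)) = prefixPt x i₁ := by
      funext j
      simp only [Pi.add_apply, hw, prefixPt]
      have : i' < j ↔ ¬ j < i₁ := by
        simp only [Fin.lt_def, hi₁]; omega
      by_cases h : i' < j
      · simp [h, (this.1 h)]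
      · have : j < i₁ := by
          by_contra h2; exact h (this.2 h2)
        simp [h, this]
    have hw1I : w + (fun _ => (1:ℤ)) ∈ I := by
      rw [hw1]
      refine hlow (fun j => ?_) hiI
      simp only [prefixPt]
      have : j < i₁ → j < i := by
        simp only [Fin.lt_def, hi₁, Fin.lt_def] at hlt ⊢
        omega
      by_cases h : j < i₁
      · simp [h, this h]
      · simp [h]; split <;> omega
    exact ((hmem w).1 hwX).2 hw1I
  · exact (hmem _).2 ⟨hiI, L1 i⟩
  · intro j hj
    exact hmemT j ((hmem _).1 hj).1
end

section
/- Let X be a Cubist subset of ℤ^r. The map λ : X → F_X sending x to x + F_{i(x)}, where i(x) = max{j : x + ε_1 + ... + ε_{j−1} ∈ X}, is a bijection from X to the set F_X of facets contained in X. -/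
/-- The vertex-facet map: `λ x = x + F_{i(x)}` where `i(x)` is the maximal index. -/
def LamRel {r : ℕ} (X : Set (Fin r → ℤ)) (x : Fin r → ℤ) (F : Set (Fin r → ℤ)) : Prop :=
  ∃ i : Fin r, IsMaxIdx X x i ∧ F = {z : Fin r → ℤ | z - x ∈ FacetAt i}

/-- A facet of `ℤ^r` is a translate `y + F_i` of a model facet. -/
def IsFacet {r : ℕ} (F : Set (Fin r → ℤ)) : Prop :=
  ∃ (y : Fin r → ℤ) (i : Fin r), F = {z : Fin r → ℤ | z - y ∈ FacetAt i}

lemma zero_mem_facetAt {r : ℕ} (i : Fin r) : (0 : Fin r → ℤ) ∈ FacetAt i :=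
  ⟨rfl, fun _ => ⟨fun _ => Or.inl rfl, fun _ => Or.inl rfl⟩⟩

lemma mem_tr_iff {r : ℕ} (I : Set (Fin r → ℤ)) (x : Fin r → ℤ) :
    x ∈ trSet I (-1) ↔ (x + fun _ => (1:ℤ)) ∈ I := by
  constructor
  · rintro ⟨a, ha, rfl⟩
    have h : ((a + fun _ => (-1:ℤ)) + fun _ => (1:ℤ)) = a := by
      funext j; show a j + (-1) + 1 = a j; ring
    rwa [h]
  · intro h
    refine ⟨x + fun _ => 1, h, ?_⟩
    funext j; show x j + 1 + (-1) = x j; ring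

lemma mem_X_iff {r : ℕ} (I : Set (Fin r → ℤ)) (x : Fin r → ℤ) :
    x ∈ I \ trSet I (-1) ↔ x ∈ I ∧ (x + fun _ => (1:ℤ)) ∉ I := by
  rw [Set.mem_diff, mem_tr_iff]

/-- Part 2 core: the facet at a vertex with maximal index is contained in X. -/
lemma facet_subset {r : ℕ} {I : Set (Fin r → ℤ)} (hlow : IsLowerSet I)
    {x : Fin r → ℤ} {i : Fin r}
    (hx : x ∈ I \ trSet I (-1))
    (hmax : IsMaxIdx (I \ trSet I (-1)) x i) :
    {z : Fin r → ℤ | z - x ∈ FacetAt i} ⊆ I \ trSet I (-1) := by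
  intro z hz
  obtain ⟨hzi, hzj⟩ := hz
  have hpI : prefixPt x i ∈ I := ((mem_X_iff I _).1 hmax.1).1
  have hx1 : (x + fun _ => (1:ℤ)) ∉ I := ((mem_X_iff I x).1 hx).2
  rw [mem_X_iff]
  constructor
  · -- z ≤ prefixPt x i
    refine hlow (fun j => ?_) hpI
    show z j ≤ x j + if j < i then 1 else 0
    rcases lt_trichotomy j i with hj | hj | hj
    · have := (hzj j).1 hj
      simp only [Pi.sub_apply] at this
      rw [if_pos hj]; omega
    · subst hj
      have : z j - x j = 0 := hzi
      rw [if_neg (lt_irrefl j)]; omega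
    · have := (hzj j).2 hj
      simp only [Pi.sub_apply] at this
      rw [if_neg (asymm hj)]; omega
  · -- z + 1 ∉ I
    intro hcon
    by_cases hik : i.val + 1 < r
    · set k : Fin r := ⟨i.val + 1, hik⟩ with hk
      have hki : i < k := by simp [Fin.lt_def, hk]
      have hkI : prefixPt x k ∈ I := by
        refine hlow (fun j => ?_) hcon
        show x j + (if j < k then 1 else 0) ≤ z j + 1
        rcases lt_trichotomy j i with hj | hj | hj
        · have := (hzj j).1 hj
          simp only [Pi.sub_apply] at this
          have : (if j < k then (1:ℤ) else 0) ≤ 1 := by split <;> omega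
          omega
        · subst hj
          have h0 : z j - x j = 0 := hzi
          have : (if j < k then (1:ℤ) else 0) ≤ 1 := by split <;> omega
          omega
        · have := (hzj j).2 hj
          simp only [Pi.sub_apply] at this
          have hjk : ¬ j < k := by
            simp only [Fin.lt_def, hk]
            have := hj
            rw [Fin.lt_def] at this
            omega
          rw [if_neg hjk]; omega
      have hkX : prefixPt x k ∉ (I \ trSet I (-1)) := by
        intro h
        exact absurd (hmax.2 k h) (not_le.2 hki)
      have hk1 : (prefixPt x k + fun _ => (1:ℤ)) ∈ I := by
        by_contra h
        exact hkX ((mem_X_iff I _).2 ⟨hkI, h⟩)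
      refine hx1 (hlow (fun j => ?_) hk1)
      show x j + 1 ≤ x j + (if j < k then 1 else 0) + 1
      split <;> omega
    · -- i is the last index
      refine hx1 (hlow (fun j => ?_) hcon)
      show x j + 1 ≤ z j + 1
      rcases lt_trichotomy j i with hj | hj | hj
      · have := (hzj j).1 hj
        simp only [Pi.sub_apply] at this
        omega
      · subst hj
        have : z j - x j = 0 := hzi
        omega
      · exfalso
        rw [Fin.lt_def] at hj
        have := j.isLt
        omega

/-- Uniqueness of the facet representation (strong form: the base point is determined). -/
lemma rep_inj {r : ℕ} {x x' : Fin r → ℤ} {i i' : Fin r}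
    (h : {z : Fin r → ℤ | z - x ∈ FacetAt i} = {z : Fin r → ℤ | z - x' ∈ FacetAt i'}) :
    x = x' := by
  have key : ∀ (a a' : Fin r → ℤ) (b b' : Fin r),
      {z : Fin r → ℤ | z - a ∈ FacetAt b} = {z : Fin r → ℤ | z - a' ∈ FacetAt b'} →
      ¬ b < b' := by
    intro a a' b b' hset hbb
    have ha : a ∈ {z : Fin r → ℤ | z - a ∈ FacetAt b} := by
      show a - a ∈ FacetAt b
      rw [sub_self]; exact zero_mem_facetAt b
    rw [hset] at ha
    have hd : (a - a') b' = 0 := ha.1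
    set w : Fin r → ℤ := fun j => if j = b' then -1 else 0 with hw
    have haw : a + w ∈ {z : Fin r → ℤ | z - a ∈ FacetAt b} := by
      show (a + w) - a ∈ FacetAt b
      rw [add_sub_cancel_left]
      refine ⟨?_, fun j => ⟨fun hj => ?_, fun hj => ?_⟩⟩
      · show (if b = b' then (-1:ℤ) else 0) = 0
        rw [if_neg (ne_of_lt hbb)]
      · left
        show (if j = b' then (-1:ℤ) else 0) = 0
        rw [if_neg (ne_of_lt (lt_trans hj hbb))]
      · show (if j = b' then (-1:ℤ) else 0) = 0 ∨ (if j = b' then (-1:ℤ) else 0) = -1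
        split <;> simp
    rw [hset] at haw
    have h1 : ((a + w) - a') b' = 0 := haw.1
    have hwb : w b' = -1 := if_pos rfl
    simp only [Pi.sub_apply, Pi.add_apply, hwb] at h1
    simp only [Pi.sub_apply] at hd
    omega
  have hii : i = i' := by
    rcases lt_trichotomy i i' with hlt | heq | hgt
    · exact absurd hlt (key _ _ _ _ h)
    · exact heq
    · exact absurd hgt (key _ _ _ _ h.symm)
  subst hii
  have ha : x ∈ {z : Fin r → ℤ | z - x ∈ FacetAt i} := by
    show x - x ∈ FacetAt i
    rw [sub_self]; exact zero_mem_facetAt i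
  rw [h] at ha
  have ha' : x' ∈ {z : Fin r → ℤ | z - x' ∈ FacetAt i} := by
    show x' - x' ∈ FacetAt i
    rw [sub_self]; exact zero_mem_facetAt i
  rw [← h] at ha'
  funext j
  have h1 := ha.1
  have h2 := ha'.1
  simp only [Pi.sub_apply] at h1 h2
  rcases lt_trichotomy j i with hj | hj | hj
  · have c1 := (ha.2 j).1 hj
    have c2 := (ha'.2 j).1 hj
    simp only [Pi.sub_apply] at c1 c2
    omega
  · subst hj; omega
  · have c1 := (ha.2 j).2 hj
    have c2 := (ha'.2 j).2 hj
    simp only [Pi.sub_apply] at c1 c2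
    omega

/-- Surjectivity core: the base point of a facet contained in X maps to that facet. -/
lemma surj_lemma {r : ℕ} {I : Set (Fin r → ℤ)}
    {y : Fin r → ℤ} {i : Fin r}
    (hsub : {z : Fin r → ℤ | z - y ∈ FacetAt i} ⊆ I \ trSet I (-1)) :
    y ∈ I \ trSet I (-1) ∧ IsMaxIdx (I \ trSet I (-1)) y i := by
  have hy : y ∈ I \ trSet I (-1) := hsub (by
    show y - y ∈ FacetAt i
    rw [sub_self]; exact zero_mem_facetAt i)
  refine ⟨hy, ?_, ?_⟩
  · apply hsub
    show prefixPt y i - y ∈ FacetAt i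
    refine ⟨?_, fun j => ⟨fun hj => ?_, fun hj => ?_⟩⟩
    · show y i + (if i < i then (1:ℤ) else 0) - y i = 0
      rw [if_neg (lt_irrefl i)]; ring
    · right
      show y j + (if j < i then (1:ℤ) else 0) - y j = 1
      rw [if_pos hj]; ring
    · left
      show y j + (if j < i then (1:ℤ) else 0) - y j = 0
      rw [if_neg (asymm hj)]; ring
  · intro k hk
    by_contra hki
    push_neg at hki
    set w : Fin r → ℤ := fun j => if k ≤ j then -1 else 0 with hw
    have hzF : (y + w) - y ∈ FacetAt i := by
      rw [add_sub_cancel_left]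
      refine ⟨?_, fun j => ⟨fun hj => ?_, fun hj => ?_⟩⟩
      · show (if k ≤ i then (-1:ℤ) else 0) = 0
        rw [if_neg (not_le.2 hki)]
      · left
        show (if k ≤ j then (-1:ℤ) else 0) = 0
        rw [if_neg (not_le.2 (lt_trans hj hki))]
      · show (if k ≤ j then (-1:ℤ) else 0) = 0 ∨ (if k ≤ j then (-1:ℤ) else 0) = -1
        split <;> simp
    have hz := hsub hzF
    have hz2 : ((y + w) + fun _ => (1:ℤ)) ∉ I := ((mem_X_iff I _).1 hz).2
    apply hz2
    have heq : ((y + w) + fun _ => (1:ℤ)) = prefixPt y k := by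
      funext j
      show y j + (if k ≤ j then (-1:ℤ) else 0) + 1 = y j + (if j < k then 1 else 0)
      by_cases hkj : k ≤ j
      · rw [if_pos hkj, if_neg (not_lt.2 hkj)]; ring
      · rw [if_neg hkj, if_pos (not_le.1 hkj)]; ring
    rw [heq]
    exact ((mem_X_iff I _).1 hk).1

/-- `λ : x ↦ x + F_{i(x)}` is a bijection from `X` onto the set of
facets contained in `X`. -/
theorem vertex_facet_bijection (r : ℕ) (X : Set (Fin r → ℤ)) (hX : IsCubist X) :
    (∀ x ∈ X, ∃! F : Set (Fin r → ℤ), LamRel X x F) ∧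
    (∀ x ∈ X, ∀ F : Set (Fin r → ℤ), LamRel X x F → IsFacet F ∧ F ⊆ X) ∧
    (∀ x ∈ X, ∀ x' ∈ X, ∀ F : Set (Fin r → ℤ),
      LamRel X x F → LamRel X x' F → x = x') ∧
    (∀ F : Set (Fin r → ℤ), IsFacet F → F ⊆ X → ∃ x ∈ X, LamRel X x F) := by
  classical
  obtain ⟨I, hne, hproper, hlow, rfl⟩ := hX
  have hr : 0 < r := by
    rcases Nat.eq_zero_or_pos r with hr0 | hr
    · exfalso
      apply hproper
      obtain ⟨w, hw⟩ := hne
      apply Set.eq_univ_of_forall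
      intro z
      have hzw : z = w := funext fun j => absurd j.isLt (by omega)
      rwa [hzw]
    · exact hr
  have exmax : ∀ x ∈ I \ trSet I (-1), ∃ i, IsMaxIdx (I \ trSet I (-1)) x i := by
    intro x hx
    have hx0 : prefixPt x ⟨0, hr⟩ ∈ I \ trSet I (-1) := by
      have h : prefixPt x ⟨0, hr⟩ = x := by
        funext j
        show x j + (if j < ⟨0, hr⟩ then (1:ℤ) else 0) = x j
        rw [if_neg (by simp [Fin.lt_def])]; ring
      rwa [h]
    set s : Finset (Fin r) := Finset.univ.filter
      (fun j => prefixPt x j ∈ I \ trSet I (-1)) with hs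
    have hsne : s.Nonempty := ⟨⟨0, hr⟩, by simp only [hs, Finset.mem_filter, Finset.mem_univ, true_and]; exact hx0⟩
    refine ⟨s.max' hsne, ?_, ?_⟩
    · have h := s.max'_mem hsne
      simp only [hs, Finset.mem_filter, Finset.mem_univ, true_and] at h
      exact h
    · intro j hj
      exact s.le_max' j (by simp only [hs, Finset.mem_filter, Finset.mem_univ, true_and]; exact hj)
  refine ⟨?_, ?_, ?_, ?_⟩
  · intro x hx
    obtain ⟨i, hi⟩ := exmax x hx
    refine ⟨{z | z - x ∈ FacetAt i}, ⟨i, hi, rfl⟩, ?_⟩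
    rintro F ⟨i', hi', rfl⟩
    have hii : i' = i := le_antisymm (hi.2 i' hi'.1) (hi'.2 i hi.1)
    rw [hii]
  · rintro x hx F ⟨i, hi, rfl⟩
    exact ⟨⟨x, i, rfl⟩, facet_subset hlow hx hi⟩
  · rintro x hx x' hx' F ⟨i, hi, hF⟩ ⟨i', hi', hF'⟩
    rw [hF] at hF'
    exact rep_inj hF'
  · rintro F ⟨y, i, rfl⟩ hsub
    obtain ⟨hy, hmax⟩ := surj_lemma hsub
    exact ⟨y, hy, i, hmax, rfl⟩
end

section
/- Let X be a Cubist subset of ℤ^r and x ∈ X a flat element with witness index i = i(x) (so x + ε_i ∉ X and x − ε_i ∉ X). Then for all j ≠ i we have both x + ε_j ∈ X and x − ε_j ∈ X. -/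
/-- if `x ∈ X` is flat with witness index `i` (so `x ± ε_i ∉ X`), then
for every `j ≠ i`, both `x + ε_j ∈ X` and `x - ε_j ∈ X`. -/
theorem flat_neighbours (r : ℕ) (X : Set (Fin r → ℤ)) (hX : IsCubist X)
    (x : Fin r → ℤ) (hx : x ∈ X) (i : Fin r)
    (h1 : x + Pi.single i 1 ∉ X) (h2 : x - Pi.single i 1 ∉ X) :
    ∀ j : Fin r, j ≠ i → x + Pi.single j 1 ∈ X ∧ x - Pi.single j 1 ∈ X := by
  obtain ⟨I, -, -, hlow, rfl⟩ := hX
  obtain ⟨hxI, hxT⟩ := hx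
  have hmem : ∀ y : Fin r → ℤ, y ∈ trSet I (-1) ↔ (y + fun _ => (1:ℤ)) ∈ I := by
    intro y
    constructor
    · rintro ⟨z, hz, rfl⟩
      convert hz using 1
      funext k; simp
    · intro h
      exact ⟨y + fun _ => 1, h, by funext k; simp⟩
  have hx1 : (x + fun _ => (1:ℤ)) ∉ I := fun h => hxT ((hmem x).mpr h)
  -- x + ε_i ∉ I
  have hi1 : x + Pi.single i 1 ∉ I := by
    intro h
    apply h1
    refine ⟨h, fun hT => ?_⟩
    apply hx1
    refine hlow ?_ ((hmem _).mp hT)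
    intro k
    simp [Pi.single_apply]
    split <;> simp
  -- x - ε_i + 𝟙 ∈ I
  have hkey : ((x - Pi.single i 1) + fun _ => (1:ℤ)) ∈ I := by
    by_contra hk
    apply h2
    refine ⟨hlow (fun k => by simp [Pi.single_apply]; split <;> simp) hxI, fun hT => ?_⟩
    exact hk ((hmem _).mp hT)
  intro j hj
  constructor
  · refine ⟨hlow (fun k => ?_) hkey, fun hT => ?_⟩
    · simp [Pi.single_apply]
      rcases eq_or_ne k j with rfl | hkj
      · simp [hj]
      · simp [hkj]
        split <;> simp
    · apply hx1
      refine hlow (fun k => ?_) ((hmem _).mp hT)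
      simp [Pi.single_apply]
      split <;> simp
  · refine ⟨hlow (fun k => by simp [Pi.single_apply]; split <;> simp) hxI, fun hT => ?_⟩
    apply hi1
    refine hlow (fun k => ?_) ((hmem _).mp hT)
    simp [Pi.single_apply]
    rcases eq_or_ne k i with rfl | hki
    · simp [(Ne.symm hj)]
    · simp [hki]
      split <;> simp
end

section
/- Let X be a Cubist subset of ℤ^r. Define a relation on X generated by: x ≻ y whenever y ∈ λx and y ≠ x, where λx = x + F_{i(x)} is the facet associated to x by the vertex-facet bijection. Then this relation generates a partial order on X; in particular, there are no nontrivial cycles x = x^0 ≻ x^1 ≻ ... ≻ x^l = x with l ≥ 1. -/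
/-- One step of the relation generating the standard partial order:
`x ≻ y` when `y ∈ λ x` and `y ≠ x`. -/
def StepRel {r : ℕ} (X : Set (Fin r → ℤ)) (x y : Fin r → ℤ) : Prop :=
  x ∈ X ∧ y ≠ x ∧ ∃ i : Fin r, IsMaxIdx X x i ∧ y - x ∈ FacetAt i

/- ------------- auxiliary lemmas ------------- -/

lemma maxIdx_unique {r : ℕ} {X : Set (Fin r → ℤ)} {x : Fin r → ℤ} {i i' : Fin r}
    (h : IsMaxIdx X x i) (h' : IsMaxIdx X x i') : i = i' :=
  le_antisymm (h'.2 i h.1) (h.2 i' h'.1)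

/-- Rule A: if a step with max index `i` is followed by a step with max index `k > i`,
then the step vector has a `-1` at some coordinate `≥ k`. -/
lemma ruleA {r : ℕ} {X I : Set (Fin r → ℤ)} (hlow : IsLowerSet I)
    (hXI : X = I \ trSet I (-1)) {x y : Fin r → ℤ} {i k : Fin r}
    (hx : x ∈ X) (hmi : IsMaxIdx X x i) (hv : y - x ∈ FacetAt i)
    (hmk : IsMaxIdx X y k) (hik : i < k) :
    ∃ j : Fin r, k ≤ j ∧ (y - x) j = -1 := by
  by_contra hcon
  push_neg at hcon
  -- for j ≥ k the step vector vanishes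
  have hzero : ∀ j : Fin r, k ≤ j → (y - x) j = 0 := by
    intro j hj
    rcases (hv.2 j).2 (lt_of_lt_of_le hik hj) with h0 | h1
    · exact h0
    · exact absurd h1 (hcon j hj)
  have hi1r : (i : ℕ) + 1 < r := lt_of_le_of_lt (Nat.succ_le_of_lt hik) k.isLt
  set i1 : Fin r := ⟨(i : ℕ) + 1, hi1r⟩ with hi1
  -- prefixPt x i1 ∉ X
  have hnX : prefixPt x i1 ∉ X := by
    intro hmem
    have := hmi.2 i1 hmem
    simp only [Fin.le_def, hi1] at this
    omega
  -- x + 1 ∉ I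
  have hx1 : (x + fun _ => (1 : ℤ)) ∉ I := by
    intro hmem
    exact (hXI ▸ hx).2 ⟨x + fun _ => (1 : ℤ), hmem, by funext j; simp⟩
  -- prefixPt x i1 ∉ I
  have hnI : prefixPt x i1 ∉ I := by
    intro hmem
    apply hnX
    rw [hXI]
    refine ⟨hmem, ?_⟩
    rintro ⟨w, hw, hwe⟩
    apply hx1
    apply hlow _ hw
    intro j
    have : w j + (-1) = prefixPt x i1 j := congrFun hwe j
    simp only [prefixPt] at this
    simp only [Pi.add_apply]
    split_ifs at this <;> omega
  -- prefixPt x i1 ≤ prefixPt y k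
  have hle : prefixPt x i1 ≤ prefixPt y k := by
    intro j
    simp only [prefixPt]
    have hyj : y j = x j + (y - x) j := by simp
    rcases lt_trichotomy j i with hj | hj | hj
    · rcases (hv.2 j).1 hj with h0 | h0 <;>
        · simp only [Pi.sub_apply] at h0
          have hjk : j < k := lt_trans hj hik
          have hji1 : j < i1 := by
            simp only [Fin.lt_def, hi1]; exact Nat.lt_succ_of_lt hj
          simp only [if_pos hjk, if_pos hji1]
          omega
    · subst hj
      have h0 := hv.1
      simp only [Pi.sub_apply] at h0
      have hjk : j < k := hik
      have hji1 : j < i1 := by simp [Fin.lt_def, hi1]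
      simp only [if_pos hjk, if_pos hji1]
      omega
    · have hji1 : ¬ j < i1 := by
        simp only [Fin.lt_def, hi1, not_lt]
        exact hj
      by_cases hjk : j < k
      · rcases (hv.2 j).2 hj with h0 | h0 <;>
          · simp only [Pi.sub_apply] at h0
            simp only [if_pos hjk, if_neg hji1]
            omega
      · have h0 := hzero j (not_lt.mp hjk)
        simp only [Pi.sub_apply] at h0
        simp only [if_neg hjk, if_neg hji1]
        omega
  exact hnI (hlow hle (hXI ▸ hmk.1).1)

/-- unfold a `TransGen` into a finite path. -/
lemma transGen_path {α : Type*} {rel : α → α → Prop} {a b : α}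
    (h : Relation.TransGen rel a b) :
    ∃ L : ℕ, 0 < L ∧ ∃ f : ℕ → α, f 0 = a ∧ f L = b ∧ ∀ t < L, rel (f t) (f (t + 1)) := by
  induction h with
  | single hs =>
    rename_i c
    exact ⟨1, one_pos, fun n => if n = 0 then a else c, by simp, by simp, by
      intro t ht
      have : t = 0 := by omega
      simp [this, hs]⟩
  | tail _ hs ih =>
    rename_i b' c _
    obtain ⟨L, hL, f, hf0, hfL, hstep⟩ := ih
    refine ⟨L + 1, by omega, fun n => if n ≤ L then f n else c, by simp [hf0], by simp, ?_⟩
    intro t ht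
    by_cases htL : t < L
    · simpa [Nat.le_of_lt htL, Nat.succ_le_of_lt htL] using hstep t htL
    · have : t = L := by omega
      subst this
      simpa [hfL] using hs

/-- the relation generated by `x ≻ y` for `y ∈ λ x` has no
nontrivial cycles, hence generates a partial order on `X`. -/
theorem standard_order_acyclic (r : ℕ) (X : Set (Fin r → ℤ)) (hX : IsCubist X) :
    ∀ x : Fin r → ℤ, ¬ Relation.TransGen (StepRel X) x x := by
  obtain ⟨I, -, -, hlow, hXI⟩ := hX
  intro x hcyc
  obtain ⟨L, hL, f, hf0, hfL, hstep⟩ := transGen_path hcyc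
  -- periodic extension
  set F : ℕ → (Fin r → ℤ) := fun t => f (t % L) with hF
  have hFsucc : ∀ t : ℕ, F (t + 1) = f (t % L + 1) := by
    intro t
    have hmod : (t + 1) % L = (t % L + 1) % L :=
      (Nat.ModEq.add_right 1 (Nat.mod_modEq t L)).symm
    by_cases h1 : t % L + 1 = L
    · simp only [hF, hmod, h1, Nat.mod_self]
      rw [hf0, ← hfL, ← h1]
    · have hlt : t % L + 1 < L := lt_of_le_of_ne (Nat.mod_lt t hL) h1
      simp only [hF, hmod, Nat.mod_eq_of_lt hlt]
  have hFlt : ∀ s < L, F s = f s := by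
    intro s hs; simp only [hF, Nat.mod_eq_of_lt hs]
  have hstepF : ∀ t : ℕ, StepRel X (F t) (F (t + 1)) := by
    intro t
    rw [hFsucc t]
    exact hstep (t % L) (Nat.mod_lt t hL)
  -- the max-index of each step
  have hchoice : ∀ t : ℕ, ∃ i : Fin r, IsMaxIdx X (F t) i ∧ F (t + 1) - F t ∈ FacetAt i :=
    fun t => (hstepF t).2.2
  set idx : ℕ → Fin r := fun t => (hchoice t).choose with hidx
  have hspec : ∀ t, IsMaxIdx X (F t) (idx t) ∧ F (t + 1) - F t ∈ FacetAt (idx t) :=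
    fun t => (hchoice t).choose_spec
  have hidx_congr : ∀ s t : ℕ, F s = F t → idx s = idx t := by
    intro s t hst
    exact maxIdx_unique (hspec s).1 (hst ▸ (hspec t).1)
  have hFmod : ∀ t : ℕ, F t = F (t % L) := by
    intro t; simp only [hF]; rw [Nat.mod_eq_of_lt (Nat.mod_lt t hL)]
  -- the maximum index along the cycle
  have hne : ((Finset.range L).image idx).Nonempty :=
    ⟨idx 0, Finset.mem_image.mpr ⟨0, Finset.mem_range.mpr hL, rfl⟩⟩
  set M : Fin r := ((Finset.range L).image idx).max' hne with hM
  have hMmax : ∀ t : ℕ, idx t ≤ M := by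
    intro t
    rw [hidx_congr t (t % L) (hFmod t)]
    exact Finset.le_max' _ _ (Finset.mem_image.mpr
      ⟨t % L, Finset.mem_range.mpr (Nat.mod_lt t hL), rfl⟩)
  obtain ⟨t0, ht0r, ht0⟩ : ∃ t0 ∈ Finset.range L, idx t0 = M :=
    Finset.mem_image.mp (Finset.max'_mem _ hne)
  -- Claim C: coordinates ≥ M are constant along the walk
  have hC : ∀ c : Fin r, M ≤ c → ∀ s < L, f (s + 1) c = f s c := by
    intro c hc
    have hsum : ∑ s ∈ Finset.range L, (f (s + 1) c - f s c) = 0 := by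
      rw [Finset.sum_range_sub (fun n => f n c) L, hfL, hf0, sub_self]
    have hnonpos : ∀ s ∈ Finset.range L, f (s + 1) c - f s c ≤ 0 := by
      intro s hs
      rw [Finset.mem_range] at hs
      have hv := (hspec s).2
      have hval : F (s + 1) - F s = fun j => f (s + 1) j - f s j := by
        rw [hFsucc s, Nat.mod_eq_of_lt hs, hFlt s hs]; rfl
      rw [hval] at hv
      have hic : idx s ≤ c := le_trans (hMmax s) hc
      rcases eq_or_lt_of_le hic with heq | hlt
      · have h' := hv.1
        simp only at h'
        rw [← heq]
        omega
      · rcases (hv.2 c).2 hlt with h0 | h1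
        · simp only at h0; omega
        · simp only at h1; omega
    intro s hs
    have := (Finset.sum_eq_zero_iff_of_nonpos hnonpos).mp hsum s (Finset.mem_range.mpr hs)
    omega
  have hCF : ∀ (t : ℕ) (c : Fin r), M ≤ c → (F (t + 1) - F t) c = 0 := by
    intro t c hc
    have h1 : F (t + 1) = f (t % L + 1) := hFsucc t
    have h2 : F t = f (t % L) := rfl
    simp only [Pi.sub_apply, h1, h2, hC c hc (t % L) (Nat.mod_lt t hL), sub_self]
  -- Claim D: index M propagates backwards
  have hD : ∀ t : ℕ, idx (t + 1) = M → idx t = M := by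
    intro t hnext
    by_contra hneq
    have hlt : idx t < M := lt_of_le_of_ne (hMmax t) hneq
    obtain ⟨j, hj, hjv⟩ := ruleA hlow hXI (hstepF t).1 (hspec t).1 (hspec t).2
      (hspec (t + 1)).1 (hnext ▸ hlt)
    rw [hnext] at hj
    rw [hCF t j hj] at hjv
    exact absurd hjv (by norm_num)
  -- all indices are M
  have hper : idx (t0 + L) = M := by
    rw [hidx_congr (t0 + L) t0 (by simp only [hF, Nat.add_mod_right])]
    exact ht0
  have hall : ∀ d ≤ t0 + L, idx (t0 + L - d) = M := by
    intro d
    induction d with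
    | zero => intro _; simpa using hper
    | succ d ih =>
      intro hd
      apply hD
      have : t0 + L - (d + 1) + 1 = t0 + L - d := by omega
      rw [this]
      exact ih (by omega)
  have hallt : ∀ s < L, idx s = M := by
    intro s hs
    have h1 : s ≤ t0 + L := by omega
    have := hall (t0 + L - s) (by omega)
    rwa [Nat.sub_sub_self h1] at this
  -- final contradiction: all step vectors are ≥ 0 with zero sum
  have hfinal : ∀ c : Fin r, f 1 c = f 0 c := by
    intro c
    have hsum : ∑ s ∈ Finset.range L, (f (s + 1) c - f s c) = 0 := by
      rw [Finset.sum_range_sub (fun n => f n c) L, hfL, hf0, sub_self]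
    have hnonneg : ∀ s ∈ Finset.range L, 0 ≤ f (s + 1) c - f s c := by
      intro s hs
      rw [Finset.mem_range] at hs
      have hv := (hspec s).2
      have hval : F (s + 1) - F s = fun j => f (s + 1) j - f s j := by
        rw [hFsucc s, Nat.mod_eq_of_lt hs, hFlt s hs]; rfl
      rw [hallt s hs] at hv
      rcases lt_trichotomy c M with hcM | hcM | hcM
      · rcases (hv.2 c).1 hcM with h0 | h1
        · rw [hval] at h0; simp only at h0; omega
        · rw [hval] at h1; simp only at h1; omega
      · have h' := hv.1
        rw [hval] at h'
        rw [← hcM] at h'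
        simp only at h'; omega
      · have := hC c (le_of_lt hcM) s hs
        omega
    have := (Finset.sum_eq_zero_iff_of_nonneg hnonneg).mp hsum 0 (Finset.mem_range.mpr hL)
    simp only [zero_add] at this
    omega
  have hne01 : F 1 ≠ F 0 := (hstepF 0).2.1
  apply hne01
  have h1 : F 1 = f 1 := by rw [hFsucc 0, Nat.zero_mod]
  have h0 : F 0 = f 0 := hFlt 0 hL
  rw [h1, h0]
  exact funext hfinal
end

section
/- Let X be a Cubist subset of ℤ^r. Define two X×X matrices over ℤ[q]: D_U(q)_{xy} = q^{d(x,y)} if y ∈ λx and 0 otherwise; D_V(q)_{xy} = q^{d(x,y)} if y ∈ μx and 0 otherwise (entries D_V(q)_{xy} may be interpreted rowwise; all but finitely many terms in each product-sum vanish). Then D_U(q) · D_V(−q)^T = I, i.e. for all x, y ∈ X: Σ_{z ∈ λx ∩ μy} q^{d(x,z)} (−q)^{d(z,y)} equals 1 if x = y and 0 otherwise. -/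
/-- The ℓ¹ (taxicab) distance on `ℤ^r`. -/
def dist1 {r : ℕ} (x y : Fin r → ℤ) : ℕ :=
  ∑ j : Fin r, (x j - y j).natAbs

namespace CubistAux

open Polynomial

variable {r : ℕ}

lemma mem_trSet_neg_one {I : Set (Fin r → ℤ)} {z : Fin r → ℤ} :
    z ∈ trSet I (-1) ↔ (z + fun _ => 1) ∈ I := by
  constructor
  · rintro ⟨w, hw, rfl⟩
    convert hw using 1
    funext j; simp
  · intro h
    exact ⟨_, h, by funext j; simp⟩

/-- Key cubist lemma: under a dominance hypothesis, we get a contradiction with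
maximality of the index `ix`. -/
lemma keyC {I : Set (Fin r → ℤ)} (hlow : IsLowerSet I)
    {x y : Fin r → ℤ} {ix iy : Fin r}
    (hxX : x ∈ I \ trSet I (-1))
    (hx : IsMaxIdx (I \ trSet I (-1)) x ix)
    (hy : prefixPt y iy ∈ I \ trSet I (-1))
    (H : ∀ j : Fin r, x j + (if j ≤ ix then 1 else 0) ≤ y j + (if j < iy then 1 else 0)) :
    False := by
  set u : Fin r → ℤ := fun j => x j + if j ≤ ix then 1 else 0 with hu
  have huy : u ≤ prefixPt y iy := by
    intro j
    simpa [prefixPt, hu] using H j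
  have huI : u ∈ I := hlow huy hy.1
  by_cases hlast : (ix : ℕ) + 1 < r
  · set ix' : Fin r := ⟨(ix : ℕ) + 1, hlast⟩ with hix'
    have hpre : prefixPt x ix' = u := by
      funext j
      simp only [prefixPt, hu]
      congr 1
      have hiff : j < ix' ↔ j ≤ ix := by
        rw [Fin.lt_def, Fin.le_def]
        simp [hix']
      simp only [hiff]
    have hnotX : u ∉ I \ trSet I (-1) := by
      intro hmem
      have h2 := hx.2 ix' (hpre ▸ hmem)
      rw [Fin.le_def] at h2
      simp [hix'] at h2
    have hutr : u ∈ trSet I (-1) := by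
      by_contra h
      exact hnotX ⟨huI, h⟩
    rw [mem_trSet_neg_one] at hutr
    have hle2 : (prefixPt x ix + fun _ => (1:ℤ)) ≤ (u + fun _ => 1) := by
      intro j
      simp only [Pi.add_apply, prefixPt, hu]
      have : (if j < ix then (1:ℤ) else 0) ≤ (if j ≤ ix then 1 else 0) := by
        split_ifs with h1 h2
        · omega
        · exact absurd h1.le h2
        · omega
        · omega
      omega
    have : prefixPt x ix ∈ trSet I (-1) := mem_trSet_neg_one.mpr (hlow hle2 hutr)
    exact hx.1.2 this
  · have hall : ∀ j : Fin r, j ≤ ix := by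
      intro j
      rw [Fin.le_def]
      have := j.isLt
      omega
    have hueq : u = x + fun _ => 1 := by
      funext j; simp [hu, hall j]
    exact hxX.2 (mem_trSet_neg_one.mpr (by rw [← hueq]; exact huI))

lemma facet_finite (i : Fin r) : (FacetAt i).Finite := by
  apply (Set.finite_Icc (fun _ => (-1:ℤ)) (fun _ => (1:ℤ))).subset
  intro z hz
  obtain ⟨h0, h⟩ := hz
  constructor <;> intro j
  · rcases lt_trichotomy j i with hj | hj | hj
    · rcases (h j).1 hj with h' | h' <;> simp [h']
    · subst hj; simp [h0]
    · rcases (h j).2 hj with h' | h' <;> simp [h']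
  · rcases lt_trichotomy j i with hj | hj | hj
    · rcases (h j).1 hj with h' | h' <;> simp [h']
    · subst hj; simp [h0]
    · rcases (h j).2 hj with h' | h' <;> simp [h']

lemma finite_facet_set (x : Fin r → ℤ) (i : Fin r) :
    {z : Fin r → ℤ | z - x ∈ FacetAt i}.Finite := by
  apply ((facet_finite i).image (fun w => w + x)).subset
  intro z hz
  exact ⟨z - x, hz, by simp⟩

lemma monomial_cancel (p q p' q' : ℕ) (h1 : p + q = p' + q')
    (h2 : q' = q + 1 ∨ q = q' + 1) :
    (X:ℤ[X]) ^ p * (-X) ^ q + X ^ p' * (-X) ^ q' = 0 := by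
  rcases h2 with h | h
  · have hp : p = p' + 1 := by omega
    subst h; subst hp; ring
  · have hp : p' = p + 1 := by omega
    subst h; subst hp; ring

lemma dist1_update_left (u z : Fin r → ℤ) (j₀ : Fin r) (w : ℤ) :
    dist1 u (Function.update z j₀ w)
      = (u j₀ - w).natAbs + ∑ j ∈ Finset.univ.erase j₀, (u j - z j).natAbs := by
  unfold dist1
  rw [← Finset.add_sum_erase _ _ (Finset.mem_univ j₀)]
  congr 1
  · simp
  · exact Finset.sum_congr rfl fun j hj => by
      rw [Function.update_of_ne (Finset.ne_of_mem_erase hj)]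

lemma dist1_update_right (z y : Fin r → ℤ) (j₀ : Fin r) (w : ℤ) :
    dist1 (Function.update z j₀ w) y
      = (w - y j₀).natAbs + ∑ j ∈ Finset.univ.erase j₀, (z j - y j).natAbs := by
  unfold dist1
  rw [← Finset.add_sum_erase _ _ (Finset.mem_univ j₀)]
  congr 1
  · simp
  · exact Finset.sum_congr rfl fun j hj => by
      rw [Function.update_of_ne (Finset.ne_of_mem_erase hj)]

lemma dist1_split (u z : Fin r → ℤ) (j₀ : Fin r) :
    dist1 u z = (u j₀ - z j₀).natAbs + ∑ j ∈ Finset.univ.erase j₀, (u j - z j).natAbs := by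
  unfold dist1
  rw [← Finset.add_sum_erase _ _ (Finset.mem_univ j₀)]

/-- The sign-reversing involution argument: flipping coordinate `j₀` kills the sum. -/
lemma sum_flip {x y : Fin r → ℤ} {S : Set (Fin r → ℤ)} (hS : S.Finite)
    (j₀ : Fin r) (c : ℤ)
    (hmem : ∀ z ∈ S, Function.update z j₀ (2 * x j₀ + c - z j₀) ∈ S)
    (hval : ∀ z ∈ S, z j₀ = x j₀ ∨ z j₀ = x j₀ + c)
    (hbet : (c = 1 ∧ x j₀ + 1 ≤ y j₀) ∨ (c = -1 ∧ y j₀ ≤ x j₀ - 1)) :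
    ∑ᶠ z ∈ S, ((X:ℤ[X]) ^ dist1 x z * (-X) ^ dist1 z y) = 0 := by
  rw [← hS.coe_toFinset, finsum_mem_coe_finset]
  have gmem : ∀ z ∈ hS.toFinset,
      Function.update z j₀ (2 * x j₀ + c - z j₀) ∈ hS.toFinset := fun z hz =>
    hS.mem_toFinset.mpr (hmem z (hS.mem_toFinset.mp hz))
  refine Finset.sum_involution
    (fun z _ => Function.update z j₀ (2 * x j₀ + c - z j₀)) ?_ ?_
    (fun z hz => gmem z hz) ?_
  · intro z hz
    have hzS : z ∈ S := hS.mem_toFinset.mp hz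
    have hv := hval z hzS
    rw [dist1_update_left, dist1_update_right, dist1_split x z j₀, dist1_split z y j₀]
    apply monomial_cancel
    · have : (x j₀ - z j₀).natAbs + (z j₀ - y j₀).natAbs
          = (x j₀ - (2 * x j₀ + c - z j₀)).natAbs
            + ((2 * x j₀ + c - z j₀) - y j₀).natAbs := by
        rcases hbet with ⟨hc, hb⟩ | ⟨hc, hb⟩ <;> subst hc <;> omega
      omega
    · have : ((2 * x j₀ + c - z j₀) - y j₀).natAbs = (z j₀ - y j₀).natAbs + 1
          ∨ (z j₀ - y j₀).natAbs = ((2 * x j₀ + c - z j₀) - y j₀).natAbs + 1 := by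
        rcases hbet with ⟨hc, hb⟩ | ⟨hc, hb⟩ <;> subst hc <;> omega
      omega
  · intro z hz _ heq
    have hzS : z ∈ S := hS.mem_toFinset.mp hz
    have hv := hval z hzS
    have h2 := congrFun heq j₀
    simp only [Function.update_self] at h2
    rcases hbet with ⟨hc, _⟩ | ⟨hc, _⟩ <;> subst hc <;> omega
  · intro z hz
    funext j
    rcases eq_or_ne j j₀ with rfl | h
    · simp only [Function.update_self]
      ring
    · simp only [Function.update_of_ne h]

end CubistAux

open Polynomial CubistAux in
/-- `D_U(q) · D_V(-q)ᵀ = I`, i.e. for `x, y ∈ X`,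
`∑_{z ∈ λx ∩ μy} q^{d(x,z)} (-q)^{d(z,y)} = δ_{xy}`. -/
theorem decomposition_inverse (r : ℕ) (X : Set (Fin r → ℤ)) (hX : IsCubist X)
    (x y : Fin r → ℤ) (hx : x ∈ X) (hy : y ∈ X)
    (ix iy : Fin r) (hix : IsMaxIdx X x ix) (hiy : IsMaxIdx X y iy) :
    ∑ᶠ z ∈ ({z : Fin r → ℤ | z - x ∈ FacetAt ix} ∩
        {z : Fin r → ℤ | z - y ∈ ConeAt iy}),
      ((Polynomial.X : Polynomial ℤ) ^ dist1 x z * (-Polynomial.X) ^ dist1 z y) =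
      if x = y then 1 else 0 := by
  obtain ⟨I, -, -, hlow, hXeq⟩ := hX
  subst hXeq
  have hSfin : ({z : Fin r → ℤ | z - x ∈ FacetAt ix} ∩
      {z : Fin r → ℤ | z - y ∈ ConeAt iy}).Finite :=
    (finite_facet_set x ix).subset Set.inter_subset_left
  by_cases hxy : x = y
  · subst hxy
    have hixiy : ix = iy := le_antisymm (hiy.2 ix hix.1) (hix.2 iy hiy.1)
    subst hixiy
    rw [if_pos rfl]
    have hSx : ({z : Fin r → ℤ | z - x ∈ FacetAt ix} ∩
        {z : Fin r → ℤ | z - x ∈ ConeAt ix}) = {x} := by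
      apply Set.eq_singleton_iff_unique_mem.mpr
      constructor
      · constructor
        · show x - x ∈ FacetAt ix
          simp [FacetAt, Pi.sub_apply]
        · show x - x ∈ ConeAt ix
          simp [ConeAt, Pi.sub_apply]
      · rintro z ⟨hzf, hzc⟩
        simp only [Set.mem_setOf_eq] at hzf hzc
        funext j
        rcases lt_trichotomy j ix with h | h | h
        · have h1 : z j - x j = 0 ∨ z j - x j = 1 := by
            simpa [Pi.sub_apply] using (hzf.2 j).1 h
          have h2 : z j - x j ≤ 0 := by
            simpa [Pi.sub_apply] using hzc.1 j h
          omega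
        · have h1 : z j - x j = 0 := by
            have := hzf.1
            rw [← h] at this
            simpa [Pi.sub_apply] using this
          omega
        · have h1 : z j - x j = 0 ∨ z j - x j = -1 := by
            simpa [Pi.sub_apply] using (hzf.2 j).2 h
          have h2 : 0 ≤ z j - x j := by
            simpa [Pi.sub_apply] using hzc.2 j h
          omega
    rw [hSx, finsum_mem_singleton]
    have hd : dist1 x x = 0 := by simp [dist1]
    rw [hd]
    simp
  · rw [if_neg hxy]
    rcases Set.eq_empty_or_nonempty ({z : Fin r → ℤ | z - x ∈ FacetAt ix} ∩
        {z : Fin r → ℤ | z - y ∈ ConeAt iy}) with hSe | ⟨z₀, hz₀⟩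
    · rw [hSe]; exact finsum_mem_empty
    · obtain ⟨hzf, hzc⟩ := hz₀
      simp only [Set.mem_setOf_eq] at hzf hzc
      -- facet and cone data for the witness z₀
      have hf0 : (z₀ ix - x ix) = 0 := by simpa [Pi.sub_apply] using hzf.1
      have hfl : ∀ j : Fin r, j < ix → z₀ j - x j = 0 ∨ z₀ j - x j = 1 := by
        intro j hj; simpa [Pi.sub_apply] using (hzf.2 j).1 hj
      have hfr : ∀ j : Fin r, ix < j → z₀ j - x j = 0 ∨ z₀ j - x j = -1 := by
        intro j hj; simpa [Pi.sub_apply] using (hzf.2 j).2 hj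
      have hcl : ∀ j : Fin r, j < iy → z₀ j - y j ≤ 0 := by
        intro j hj; simpa [Pi.sub_apply] using hzc.1 j hj
      have hcr : ∀ j : Fin r, iy < j → 0 ≤ z₀ j - y j := by
        intro j hj; simpa [Pi.sub_apply] using hzc.2 j hj
      -- existence of a flippable coordinate
      have hflip : ∃ j₀ : Fin r,
          (j₀ < ix ∧ j₀ ≤ iy ∧ x j₀ < y j₀) ∨ (ix < j₀ ∧ iy ≤ j₀ ∧ y j₀ < x j₀) := by
        by_contra hnf
        push_neg at hnf
        rcases lt_trichotomy ix iy with hlt | heq | hgt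
        · refine keyC hlow hx hix hiy.1 (fun j => ?_)
          split_ifs with ha hb hb
          · -- j ≤ ix, j < iy : need x j ≤ y j
            rcases lt_or_eq_of_le ha with h | h
            · have := hfl j h; have := hcl j hb; omega
            · have h0 := hf0
              rw [← h] at h0
              have := hcl j hb; omega
          · exact absurd (lt_of_le_of_lt ha hlt) hb
          · -- ix < j, j < iy : need x j ≤ y j + 1
            have := hfr j (not_le.mp ha); have := hcl j hb; omega
          · -- ix < j, iy ≤ j : no-flip gives x j ≤ y j
            have := (hnf j).2 (not_le.mp ha) (not_lt.mp hb); omega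
        · subst heq
          -- x and y agree away from ix
          have hag : ∀ j : Fin r, j ≠ ix → x j = y j := by
            intro j hj
            rcases lt_or_gt_of_ne hj with h | h
            · have h1 := hfl j h; have h2 := hcl j h
              have h3 := (hnf j).1 h h.le; omega
            · have h1 := hfr j h; have h2 := hcr j h
              have h3 := (hnf j).2 h h.le; omega
          rcases lt_trichotomy (x ix) (y ix) with hv | hv | hv
          · refine keyC hlow hx hix hiy.1 (fun j => ?_)
            rcases eq_or_ne j ix with rfl | hj
            · simp only [le_refl, if_pos, lt_irrefl, if_neg (lt_irrefl _)]
              omega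
            · have := hag j hj
              split_ifs <;> omega
          · exact hxy (funext fun j => by
              rcases eq_or_ne j ix with rfl | hj
              · exact hv
              · exact hag j hj)
          · refine keyC hlow hy hiy hix.1 (fun j => ?_)
            rcases eq_or_ne j ix with rfl | hj
            · simp only [le_refl, if_pos, lt_irrefl, if_neg (lt_irrefl _)]
              omega
            · have := hag j hj
              split_ifs <;> omega
        · refine keyC hlow hy hiy hix.1 (fun j => ?_)
          split_ifs with ha hb hb
          · -- j ≤ iy, j < ix : no-flip gives y j ≤ x j
            have := (hnf j).1 hb (ha); omega
          · exact absurd (lt_of_le_of_lt ha hgt) hb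
          · -- iy < j, j < ix : need y j ≤ x j + 1
            have := hcr j (not_le.mp ha); have := hfl j hb; omega
          · -- iy < j, ix ≤ j : need y j ≤ x j
            rcases lt_or_eq_of_le (not_lt.mp hb) with h | h
            · have := hfr j h; have := hcr j (not_le.mp ha); omega
            · have h0 := hf0
              rw [h] at h0
              have := hcr j (not_le.mp ha); omega
      obtain ⟨j₀, hj₀⟩ := hflip
      rcases hj₀ with ⟨h1, h2, h3⟩ | ⟨h1, h2, h3⟩
      · -- flip with c = 1
        refine sum_flip hSfin j₀ 1 ?_ ?_ (Or.inl ⟨rfl, by omega⟩)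
        · rintro z ⟨hzf', hzc'⟩
          simp only [Set.mem_setOf_eq] at hzf' hzc'
          have hv : z j₀ - x j₀ = 0 ∨ z j₀ - x j₀ = 1 := by
            simpa [Pi.sub_apply] using (hzf'.2 j₀).1 h1
          constructor
          · show _ ∈ FacetAt ix
            refine ⟨?_, fun j => ⟨fun hj => ?_, fun hj => ?_⟩⟩
            · rw [Pi.sub_apply, Function.update_of_ne (ne_of_gt h1)]
              exact hzf'.1
            · rcases eq_or_ne j j₀ with rfl | hne
              · rw [Pi.sub_apply, Function.update_self]; omega
              · rw [Pi.sub_apply, Function.update_of_ne hne]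
                exact (hzf'.2 j).1 hj
            · rcases eq_or_ne j j₀ with rfl | hne
              · exact absurd (h1.trans hj) (lt_irrefl _)
              · rw [Pi.sub_apply, Function.update_of_ne hne]
                exact (hzf'.2 j).2 hj
          · show _ ∈ ConeAt iy
            refine ⟨fun j hj => ?_, fun j hj => ?_⟩
            · rcases eq_or_ne j j₀ with rfl | hne
              · rw [Pi.sub_apply, Function.update_self]; omega
              · rw [Pi.sub_apply, Function.update_of_ne hne]
                exact hzc'.1 j hj
            · rcases eq_or_ne j j₀ with rfl | hne
              · exact absurd (lt_of_le_of_lt h2 hj) (lt_irrefl _)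
              · rw [Pi.sub_apply, Function.update_of_ne hne]
                exact hzc'.2 j hj
        · rintro z ⟨hzf', -⟩
          simp only [Set.mem_setOf_eq] at hzf'
          have hv : z j₀ - x j₀ = 0 ∨ z j₀ - x j₀ = 1 := by
            simpa [Pi.sub_apply] using (hzf'.2 j₀).1 h1
          omega
      · -- flip with c = -1
        refine sum_flip hSfin j₀ (-1) ?_ ?_ (Or.inr ⟨rfl, by omega⟩)
        · rintro z ⟨hzf', hzc'⟩
          simp only [Set.mem_setOf_eq] at hzf' hzc'
          have hv : z j₀ - x j₀ = 0 ∨ z j₀ - x j₀ = -1 := by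
            simpa [Pi.sub_apply] using (hzf'.2 j₀).2 h1
          constructor
          · show _ ∈ FacetAt ix
            refine ⟨?_, fun j => ⟨fun hj => ?_, fun hj => ?_⟩⟩
            · rw [Pi.sub_apply, Function.update_of_ne (ne_of_lt h1)]
              exact hzf'.1
            · rcases eq_or_ne j j₀ with rfl | hne
              · exact absurd (hj.trans h1) (lt_irrefl _)
              · rw [Pi.sub_apply, Function.update_of_ne hne]
                exact (hzf'.2 j).1 hj
            · rcases eq_or_ne j j₀ with rfl | hne
              · rw [Pi.sub_apply, Function.update_self]; omega
              · rw [Pi.sub_apply, Function.update_of_ne hne]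
                exact (hzf'.2 j).2 hj
          · show _ ∈ ConeAt iy
            refine ⟨fun j hj => ?_, fun j hj => ?_⟩
            · rcases eq_or_ne j j₀ with rfl | hne
              · exact absurd (lt_of_lt_of_le hj h2) (lt_irrefl _)
              · rw [Pi.sub_apply, Function.update_of_ne hne]
                exact hzc'.1 j hj
            · rcases eq_or_ne j j₀ with rfl | hne
              · rw [Pi.sub_apply, Function.update_self]; omega
              · rw [Pi.sub_apply, Function.update_of_ne hne]
                exact hzc'.2 j hj
        · rintro z ⟨hzf', -⟩
          simp only [Set.mem_setOf_eq] at hzf'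
          have hv : z j₀ - x j₀ = 0 ∨ z j₀ - x j₀ = -1 := by
            simpa [Pi.sub_apply] using (hzf'.2 j₀).2 h1
          omega
end

section
/- Let X be a Cubist subset of ℤ^r with standard partial order ⪰ (generated by x ⪰ y for y ∈ λx). If x, y ∈ X and x ∈ μy, then x ⪰ y. -/
namespace ConeOrderAux

variable {r : ℕ}

/-- The all-ones vector. -/
def onev : Fin r → ℤ := fun _ => 1

/-- `x + ε_1 + ... + ε_{i+1}` (i.e. add 1 to coordinates `≤ i`). -/
def sucPt (x : Fin r → ℤ) (i : Fin r) : Fin r → ℤ :=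
  fun j => x j + if j ≤ i then 1 else 0

lemma mem_tr {I : Set (Fin r → ℤ)} {x : Fin r → ℤ} :
    x ∈ trSet I (-1) ↔ x + onev ∈ I := by
  constructor
  · rintro ⟨w, hw, rfl⟩
    have : (w + fun _ => (-1 : ℤ)) + onev = w := by
      funext j; simp [onev]
    rwa [this]
  · intro h
    exact ⟨x + onev, h, by funext j; simp [onev]⟩

lemma mem_X_iff {I X : Set (Fin r → ℤ)} (hXI : X = I \ trSet I (-1)) {x : Fin r → ℤ} :
    x ∈ X ↔ x ∈ I ∧ x + onev ∉ I := by
  subst hXI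
  simp [Set.mem_diff, mem_tr]

lemma prefix_mem {I X : Set (Fin r → ℤ)} (hXI : X = I \ trSet I (-1))
    {x : Fin r → ℤ} {i : Fin r} (hi : IsMaxIdx X x i) : prefixPt x i ∈ I :=
  ((mem_X_iff hXI).1 hi.1).1

lemma sucPt_not_mem {I X : Set (Fin r → ℤ)} (hI : IsLowerSet I)
    (hXI : X = I \ trSet I (-1)) {x : Fin r → ℤ} (hx : x ∈ X)
    {i : Fin r} (hi : IsMaxIdx X x i) : sucPt x i ∉ I := by
  have hx1 : x + onev ∉ I := ((mem_X_iff hXI).1 hx).2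
  by_cases h : i.1 + 1 < r
  · have hpe : prefixPt x ⟨i.1 + 1, h⟩ = sucPt x i := by
      funext j
      have he : j < (⟨i.1 + 1, h⟩ : Fin r) ↔ j ≤ i := by
        rw [Fin.lt_def, Fin.le_def]
        exact Nat.lt_succ_iff
      simp only [prefixPt, sucPt, he]
    intro hmem
    have hP : prefixPt x ⟨i.1 + 1, h⟩ ∈ I := by rw [hpe]; exact hmem
    have hP1 : prefixPt x ⟨i.1 + 1, h⟩ + onev ∉ I := by
      intro hc
      apply hx1
      apply hI ?_ hc
      intro j
      simp only [Pi.add_apply, prefixPt, onev]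
      split <;> omega
    have hmax : i.1 + 1 ≤ i.1 := hi.2 ⟨i.1 + 1, h⟩ ((mem_X_iff hXI).2 ⟨hP, hP1⟩)
    omega
  · have heq : sucPt x i = x + onev := by
      funext j
      have hj : j ≤ i := by
        have h1 := j.isLt
        have h2 := i.isLt
        simp only [Fin.le_def]
        omega
      simp [sucPt, onev, hj]
    rw [heq]; exact hx1

lemma facet_mem {I X : Set (Fin r → ℤ)} (hI : IsLowerSet I)
    (hXI : X = I \ trSet I (-1)) {x : Fin r → ℤ} (hx : x ∈ X)
    {i : Fin r} (hi : IsMaxIdx X x i) {f : Fin r → ℤ} (hf : f ∈ FacetAt i) :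
    x + f ∈ X := by
  obtain ⟨hfi, hfj⟩ := hf
  have h1 : x + f ∈ I := by
    apply hI ?_ (prefix_mem hXI hi)
    intro j
    simp only [Pi.add_apply, prefixPt]
    rcases lt_trichotomy j i with h | h | h
    · rw [if_pos h]
      rcases (hfj j).1 h with e | e <;> omega
    · subst h; rw [if_neg (lt_irrefl _)]; omega
    · rw [if_neg (not_lt_of_gt h)]
      rcases (hfj j).2 h with e | e <;> omega
  have h2 : x + f + onev ∉ I := by
    intro hc
    apply sucPt_not_mem hI hXI hx hi
    apply hI ?_ hc
    intro j
    simp only [Pi.add_apply, sucPt, onev]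
    rcases lt_trichotomy j i with h | h | h
    · rw [if_pos h.le]
      rcases (hfj j).1 h with e | e <;> omega
    · subst h; rw [if_pos le_rfl]; omega
    · rw [if_neg (not_le_of_gt h)]
      rcases (hfj j).2 h with e | e <;> omega
  exact (mem_X_iff hXI).2 ⟨h1, h2⟩

lemma exists_maxIdx {X : Set (Fin r → ℤ)} (hr : 0 < r) {x : Fin r → ℤ} (hx : x ∈ X) :
    ∃ i, IsMaxIdx X x i := by
  classical
  have h0 : prefixPt x ⟨0, hr⟩ ∈ X := by
    have : prefixPt x ⟨0, hr⟩ = x := by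
      funext j
      simp [prefixPt, Fin.lt_def]
    rwa [this]
  let S : Finset (Fin r) := Finset.univ.filter fun j => prefixPt x j ∈ X
  have hS : S.Nonempty := ⟨⟨0, hr⟩, by simp [S, h0]⟩
  refine ⟨S.max' hS, ?_, ?_⟩
  · have := S.max'_mem hS
    simp only [S, Finset.mem_filter] at this
    exact this.2
  · intro j hj
    exact S.le_max' j (by simp [S, hj])

lemma stuck_eq {I X : Set (Fin r → ℤ)} (hI : IsLowerSet I)
    (hXI : X = I \ trSet I (-1)) {x y : Fin r → ℤ} (hx : x ∈ X) (hy : y ∈ X)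
    {i iy : Fin r} (hi : IsMaxIdx X x i) (hiy : IsMaxIdx X y iy)
    (hc1 : ∀ j, j < iy → x j - y j ≤ 0) (hc2 : ∀ j, iy < j → 0 ≤ x j - y j)
    (hs1 : ∀ j, j < i → 0 ≤ x j - y j) (hs2 : ∀ j, i < j → x j - y j ≤ 0) :
    x = y := by
  have hxA := prefix_mem hXI hi
  have hxB := sucPt_not_mem hI hXI hx hi
  have hyA := prefix_mem hXI hiy
  have hyB := sucPt_not_mem hI hXI hy hiy
  have key1 : ¬(i < iy ∨ (i = iy ∧ x i - y i ≤ -1)) := by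
    intro hcase
    apply hxB
    apply hI ?_ hyA
    intro j
    simp only [sucPt, prefixPt]
    rcases hcase with hcase | ⟨rfl, hzi⟩
    · rcases lt_trichotomy j i with h | h | h
      · rw [if_pos h.le, if_pos (h.trans hcase)]
        have := hs1 j h
        have := hc1 j (h.trans hcase)
        omega
      · subst h
        rw [if_pos le_rfl, if_pos hcase]
        have := hc1 j hcase
        omega
      · rw [if_neg (not_le_of_gt h)]
        have := hs2 j h
        split <;> omega
    · rcases lt_trichotomy j i with h | h | h
      · rw [if_pos h.le, if_pos h]
        have := hs1 j h
        have := hc1 j h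
        omega
      · subst h
        rw [if_pos le_rfl, if_neg (lt_irrefl _)]
        omega
      · rw [if_neg (not_le_of_gt h), if_neg (not_lt_of_gt h)]
        have := hs2 j h
        omega
  have key2 : ¬(iy < i ∨ (i = iy ∧ 1 ≤ x i - y i)) := by
    intro hcase
    apply hyB
    apply hI ?_ hxA
    intro j
    simp only [sucPt, prefixPt]
    rcases hcase with hcase | ⟨rfl, hzi⟩
    · rcases lt_trichotomy j iy with h | h | h
      · rw [if_pos h.le, if_pos (h.trans hcase)]
        have := hs1 j (h.trans hcase)
        have := hc1 j h
        omega
      · subst h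
        rw [if_pos le_rfl, if_pos hcase]
        have := hs1 j hcase
        omega
      · rw [if_neg (not_le_of_gt h)]
        have := hc2 j h
        split <;> omega
    · rcases lt_trichotomy j i with h | h | h
      · rw [if_pos h.le, if_pos h]
        have := hs1 j h
        have := hc1 j h
        omega
      · subst h
        rw [if_pos le_rfl, if_neg (lt_irrefl _)]
        omega
      · rw [if_neg (not_le_of_gt h), if_neg (not_lt_of_gt h)]
        have := hc2 j h
        omega
  have hii : i = iy := by
    rcases lt_trichotomy i iy with h | h | h
    · exact absurd (Or.inl h) key1
    · exact h
    · exact absurd (Or.inl h) key2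
  have hz0 : x i - y i = 0 := by
    rcases lt_trichotomy (x i - y i) 0 with h | h | h
    · exact absurd (Or.inr ⟨hii, by omega⟩) key1
    · exact h
    · exact absurd (Or.inr ⟨hii, by omega⟩) key2
  funext j
  rcases lt_trichotomy j i with h | h | h
  · have := hs1 j h
    have := hc1 j (hii ▸ h)
    omega
  · subst h; omega
  · have := hs2 j h
    have := hc2 j (hii ▸ h)
    omega

lemma main_aux {I X : Set (Fin r → ℤ)} (hI : IsLowerSet I)
    (hXI : X = I \ trSet I (-1)) {y : Fin r → ℤ} (hy : y ∈ X)
    {iy : Fin r} (hiy : IsMaxIdx X y iy) :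
    ∀ N : ℕ, ∀ x : Fin r → ℤ, x ∈ X → x - y ∈ ConeAt iy →
      (∑ j, (x j - y j).natAbs) < N → Relation.ReflTransGen (StepRel X) x y := by
  intro N
  induction N with
  | zero => intro x _ _ h; omega
  | succ n ih =>
    intro x hx hcone hlt
    obtain ⟨hc1, hc2⟩ := hcone
    simp only [Pi.sub_apply] at hc1 hc2
    obtain ⟨i, hi⟩ := exists_maxIdx iy.pos hx
    classical
    set f : Fin r → ℤ := fun j =>
      if j < i ∧ x j - y j ≤ -1 then 1
      else if i < j ∧ 1 ≤ x j - y j then -1 else 0 with hfdef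
    have hfval : ∀ j, (j < i ∧ x j - y j ≤ -1 ∧ f j = 1) ∨
        (i < j ∧ 1 ≤ x j - y j ∧ f j = -1) ∨
        (¬(j < i ∧ x j - y j ≤ -1) ∧ ¬(i < j ∧ 1 ≤ x j - y j) ∧ f j = 0) := by
      intro j
      simp only [hfdef]
      split_ifs with h1 h2
      · exact Or.inl ⟨h1.1, h1.2, rfl⟩
      · exact Or.inr (Or.inl ⟨h2.1, h2.2, rfl⟩)
      · exact Or.inr (Or.inr ⟨h1, h2, rfl⟩)
    by_cases hstuck : ∀ j, f j = 0
    · have hs1 : ∀ j, j < i → 0 ≤ x j - y j := by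
        intro j hj
        rcases hfval j with ⟨_, _, hfe⟩ | ⟨h', _, _⟩ | ⟨hn, _, _⟩
        · rw [hstuck j] at hfe; omega
        · exact absurd hj (lt_asymm h')
        · by_contra hcon
          exact hn ⟨hj, by omega⟩
      have hs2 : ∀ j, i < j → x j - y j ≤ 0 := by
        intro j hj
        rcases hfval j with ⟨h', _, _⟩ | ⟨_, _, hfe⟩ | ⟨_, hn, _⟩
        · exact absurd hj (lt_asymm h')
        · rw [hstuck j] at hfe; omega
        · by_contra hcon
          exact hn ⟨hj, by omega⟩
      have hxy : x = y := stuck_eq hI hXI hx hy hi hiy hc1 hc2 hs1 hs2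
      rw [hxy]
    · push_neg at hstuck
      obtain ⟨j0, hj0⟩ := hstuck
      have hfF : f ∈ FacetAt i := by
        refine ⟨?_, ?_⟩
        · rcases hfval i with ⟨h', _, _⟩ | ⟨h', _, _⟩ | ⟨_, _, hfe⟩
          · exact absurd h' (lt_irrefl _)
          · exact absurd h' (lt_irrefl _)
          · exact hfe
        · intro j
          constructor
          · intro hj
            rcases hfval j with ⟨_, _, hfe⟩ | ⟨h', _, _⟩ | ⟨_, _, hfe⟩
            · exact Or.inr hfe
            · exact absurd hj (lt_asymm h')
            · exact Or.inl hfe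
          · intro hj
            rcases hfval j with ⟨h', _, _⟩ | ⟨_, _, hfe⟩ | ⟨_, _, hfe⟩
            · exact absurd hj (lt_asymm h')
            · exact Or.inr hfe
            · exact Or.inl hfe
      have hx' : x + f ∈ X := facet_mem hI hXI hx hi hfF
      have hstep : StepRel X x (x + f) := by
        refine ⟨hx, ?_, i, hi, ?_⟩
        · intro he
          have := congrFun he j0
          simp only [Pi.add_apply] at this
          apply hj0
          omega
        · have : x + f - x = f := by funext j; simp
          rw [this]
          exact hfF
      have hcone' : (x + f) - y ∈ ConeAt iy := by
        refine ⟨?_, ?_⟩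
        · intro j hj
          have hcj := hc1 j hj
          simp only [Pi.sub_apply, Pi.add_apply]
          rcases hfval j with ⟨_, h2, h3⟩ | ⟨_, h2, h3⟩ | ⟨_, _, h3⟩ <;> omega
        · intro j hj
          have hcj := hc2 j hj
          simp only [Pi.sub_apply, Pi.add_apply]
          rcases hfval j with ⟨_, h2, h3⟩ | ⟨_, h2, h3⟩ | ⟨_, _, h3⟩ <;> omega
      have hmeas : (∑ j, ((x + f) j - y j).natAbs) < ∑ j, (x j - y j).natAbs := by
        apply Finset.sum_lt_sum
        · intro j _
          simp only [Pi.add_apply]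
          rcases hfval j with ⟨_, h2, h3⟩ | ⟨_, h2, h3⟩ | ⟨_, _, h3⟩ <;> omega
        · refine ⟨j0, Finset.mem_univ _, ?_⟩
          simp only [Pi.add_apply]
          rcases hfval j0 with ⟨_, h2, h3⟩ | ⟨_, h2, h3⟩ | ⟨_, _, h3⟩ <;> omega
      exact Relation.ReflTransGen.head hstep (ih (x + f) hx' hcone' (by omega))

end ConeOrderAux

/-- if `x ∈ μ y` then `x ⪰ y` in the standard partial order
(the reflexive-transitive closure of the facet relation). -/
theorem cone_implies_order (r : ℕ) (X : Set (Fin r → ℤ)) (hX : IsCubist X)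
    (x y : Fin r → ℤ) (hx : x ∈ X) (hy : y ∈ X)
    (iy : Fin r) (hiy : IsMaxIdx X y iy) (hmu : x - y ∈ ConeAt iy) :
    Relation.ReflTransGen (StepRel X) x y := by
  obtain ⟨I, -, -, hI, hXI⟩ := hX
  exact ConeOrderAux.main_aux hI hXI hy hiy ((∑ j, (x j - y j).natAbs) + 1) x hx hmu
    (Nat.lt_succ_self _)
end

section
/- Let P be the set {(u,v) ∈ ℤ² : 0 ≤ u < v ≤ p−1} and let P_B ⊆ P be any 'pyramid', i.e. a subset such that (u,v) ∈ P_B and u < w < v imply (u,w) ∈ P_B and (w,v) ∈ P_B. Define x_B(u,v) = (−u−1, v, 0) if (u,v) ∈ ℤ², u < v, (u,v) ∉ P_B, and x_B(u,v) = (−u, v+1, 1) if (u,v) ∈ P_B. Then X_B := Im(x_B) ∪ {(i,j,1) ∈ ℤ³ : i + j ≤ 1} is a Cubist subset of ℤ³; specifically X_B⁻ := ℤ×ℤ×ℤ_{≤0} ∪ {(i,j,1) : i+j ≤ 1 or (−i, j−1) ∈ P_B} is a nonempty proper ideal of ℤ³ with X_B = X_B⁻ \ X_B⁻[−1]. -/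
/-- for a pyramid `P_B ⊆ P = {(u,v) : 0 ≤ u < v ≤ p-1}`, the set
`X_B = Im(x_B) ∪ {(i,j,1) : i+j ≤ 1}` is a Cubist subset of `ℤ³`, via the
nonempty proper ideal
`X_B⁻ = ℤ×ℤ×ℤ_{≤0} ∪ {(i,j,1) : i+j ≤ 1 or (-i,j-1) ∈ P_B}`. -/
theorem block_cubist (p : ℤ) (hp : 2 ≤ p) (PB : Set (ℤ × ℤ))
    (hsub : PB ⊆ {uv : ℤ × ℤ | 0 ≤ uv.1 ∧ uv.1 < uv.2 ∧ uv.2 ≤ p - 1})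
    (hpyr : ∀ u v w : ℤ, (u, v) ∈ PB → u < w → w < v →
      (u, w) ∈ PB ∧ (w, v) ∈ PB) :
    Set.Nonempty ({w : ℤ × ℤ × ℤ | w.2.2 ≤ 0} ∪
        {w : ℤ × ℤ × ℤ | w.2.2 = 1 ∧ (w.1 + w.2.1 ≤ 1 ∨ (-w.1, w.2.1 - 1) ∈ PB)}) ∧
    ({w : ℤ × ℤ × ℤ | w.2.2 ≤ 0} ∪
        {w : ℤ × ℤ × ℤ | w.2.2 = 1 ∧ (w.1 + w.2.1 ≤ 1 ∨ (-w.1, w.2.1 - 1) ∈ PB)}) ≠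
      Set.univ ∧
    IsLowerSet ({w : ℤ × ℤ × ℤ | w.2.2 ≤ 0} ∪
        {w : ℤ × ℤ × ℤ | w.2.2 = 1 ∧ (w.1 + w.2.1 ≤ 1 ∨ (-w.1, w.2.1 - 1) ∈ PB)}) ∧
    {w : ℤ × ℤ × ℤ |
        (∃ u v : ℤ, u < v ∧ (u, v) ∉ PB ∧ w = (-u - 1, v, 0)) ∨
        (∃ u v : ℤ, (u, v) ∈ PB ∧ w = (-u, v + 1, 1)) ∨
        (w.2.2 = 1 ∧ w.1 + w.2.1 ≤ 1)} =
      ({w : ℤ × ℤ × ℤ | w.2.2 ≤ 0} ∪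
          {w : ℤ × ℤ × ℤ | w.2.2 = 1 ∧ (w.1 + w.2.1 ≤ 1 ∨ (-w.1, w.2.1 - 1) ∈ PB)}) \
        ((fun w : ℤ × ℤ × ℤ => w - (1, 1, 1)) ''
          ({w : ℤ × ℤ × ℤ | w.2.2 ≤ 0} ∪
            {w : ℤ × ℤ × ℤ | w.2.2 = 1 ∧ (w.1 + w.2.1 ≤ 1 ∨ (-w.1, w.2.1 - 1) ∈ PB)})) := by
  -- interval property derived from the pyramid property
  have pyr2 : ∀ u v u' v' : ℤ, (u, v) ∈ PB → u ≤ u' → v' ≤ v → u' < v' → (u', v') ∈ PB := by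
    intro u v u' v' h hu hv huv
    have h1 : (u', v) ∈ PB := by
      rcases eq_or_lt_of_le hu with rfl | h'
      · exact h
      · exact (hpyr u v u' h h' (by omega)).2
    rcases eq_or_lt_of_le hv with rfl | h'
    · exact h1
    · exact (hpyr u' v v' h1 huv h').1
  set S : Set (ℤ × ℤ × ℤ) := ({w : ℤ × ℤ × ℤ | w.2.2 ≤ 0} ∪
      {w : ℤ × ℤ × ℤ | w.2.2 = 1 ∧ (w.1 + w.2.1 ≤ 1 ∨ (-w.1, w.2.1 - 1) ∈ PB)})
    with hSdef
  have hmemS : ∀ a b c : ℤ, ((a, b, c) ∈ S) ↔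
      c ≤ 0 ∨ (c = 1 ∧ (a + b ≤ 1 ∨ (-a, b - 1) ∈ PB)) := by
    intro a b c
    rw [hSdef]
    simp [Set.mem_union, Set.mem_setOf_eq]
  have hcongr : ∀ a b a' b' : ℤ, a = a' → b = b' → (a, b) ∈ PB → (a', b') ∈ PB := by
    rintro a b a' b' rfl rfl h; exact h
  have himg : ∀ a b c : ℤ,
      ((a, b, c) ∈ (fun w : ℤ × ℤ × ℤ => w - (1, 1, 1)) '' S) ↔ (a + 1, b + 1, c + 1) ∈ S := by
    intro a b c
    constructor
    · rintro ⟨⟨x, y, z⟩, hx, heq⟩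
      have hxyz : x = a + 1 ∧ y = b + 1 ∧ z = c + 1 := by
        simp only [Prod.mk_sub_mk, Prod.mk.injEq] at heq
        omega
      obtain ⟨rfl, rfl, rfl⟩ := hxyz
      exact hx
    · intro h
      exact ⟨(a + 1, b + 1, c + 1), h, by simp [Prod.ext_iff]⟩
  refine ⟨⟨(0, 0, 0), (hmemS 0 0 0).2 (Or.inl le_rfl)⟩, ?_, ?_, ?_⟩
  · intro h
    have h1 : ((0 : ℤ), (p + 1 : ℤ), (1 : ℤ)) ∈ S := h ▸ Set.mem_univ _
    rcases (hmemS _ _ _).1 h1 with h1 | ⟨_, h2 | h2⟩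
    · omega
    · omega
    · have := hsub h2; simp only [Set.mem_setOf_eq] at this; omega
  · rintro ⟨a1, a2, a3⟩ ⟨b1, b2, b3⟩ hle ha
    obtain ⟨h1, h2, h3⟩ : b1 ≤ a1 ∧ b2 ≤ a2 ∧ b3 ≤ a3 := ⟨hle.1, hle.2.1, hle.2.2⟩
    rw [hmemS] at ha ⊢
    rcases le_or_gt b3 0 with hb | hb
    · exact Or.inl hb
    · rcases ha with ha | ⟨hz, hc⟩
      · omega
      · refine Or.inr ⟨by omega, ?_⟩
        rcases hc with hc | hc
        · exact Or.inl (by omega)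
        · have hPB := hsub hc
          simp only [Set.mem_setOf_eq] at hPB
          rcases le_or_gt b2 (1 - b1) with hle2 | hlt2
          · exact Or.inl (by omega)
          · exact Or.inr (pyr2 _ _ _ _ hc (by omega) (by omega) (by omega))
  · ext ⟨i, j, z⟩
    simp only [Set.mem_setOf_eq, Set.mem_diff]
    constructor
    · rintro (⟨u, v, huv, hnot, heq⟩ | ⟨u, v, hmem, heq⟩ | ⟨hz, hij⟩)
      · obtain ⟨rfl, rfl, rfl⟩ : i = -u - 1 ∧ j = v ∧ z = 0 := by
          simp only [Prod.mk.injEq] at heq; tauto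
        refine ⟨(hmemS _ _ _).2 (Or.inl le_rfl), ?_⟩
        rw [himg]
        intro hS
        rcases (hmemS _ _ _).1 hS with h | ⟨_, h | h⟩
        · omega
        · omega
        · exact hnot (hcongr _ _ _ _ (by ring) (by ring) h)
      · obtain ⟨rfl, rfl, rfl⟩ : i = -u ∧ j = v + 1 ∧ z = 1 := by
          simp only [Prod.mk.injEq] at heq; tauto
        refine ⟨(hmemS _ _ _).2 (Or.inr ⟨rfl, Or.inr
            (hcongr _ _ _ _ (by ring) (by ring) hmem)⟩), ?_⟩
        · rw [himg]
          intro hS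
          rcases (hmemS _ _ _).1 hS with h | ⟨h2, _⟩ <;> omega
      · refine ⟨(hmemS _ _ _).2 (Or.inr ⟨hz, Or.inl hij⟩), ?_⟩
        rw [himg]
        intro hS
        rcases (hmemS _ _ _).1 hS with h | ⟨h2, _⟩ <;> omega
    · rintro ⟨hS, hnot⟩
      rw [himg, hmemS] at hnot
      push_neg at hnot
      rcases (hmemS _ _ _).1 hS with h | ⟨hz, hc⟩
      · -- z ≤ 0 ; from hnot, z + 1 > 0 so z = 0
        obtain ⟨hnz, hn1⟩ := hnot
        have hz0 : z = 0 := by omega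
        subst hz0
        obtain ⟨hsum, hnPB⟩ := hn1 rfl
        refine Or.inl ⟨-i - 1, j, by omega, fun hco => hnPB
          (hcongr _ _ _ _ (by ring) (by ring) hco), ?_⟩
        rw [show (-(-i - 1) - 1 : ℤ) = i by ring]
      · subst hz
        rcases hc with hc | hc
        · exact Or.inr (Or.inr ⟨rfl, hc⟩)
        · refine Or.inr (Or.inl ⟨-i, j - 1, hc, ?_⟩)
          rw [show (-(-i) : ℤ) = i by ring, show (j - 1 + 1 : ℤ) = j by ring]
end
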